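/- Let e₁, e₂ be the canonical basis of ℓ₂² (ℝ² with the Euclidean norm). Then sup{ Σ_{j=1}^m | |x_j*(e₁)| − |x_j*(e₂)| | : m ∈ ℕ, x₁*,…,x_m* ∈ (ℓ₂²)*, sup_{x ∈ B_{ℓ₂²}} Σ_{j=1}^m |x_j*(x)| ≤ 1 } = √2. (In the language of free Banach lattices: ‖ |δ_{e₁}| − |δ_{e₂}| ‖_{FBL[ℓ₂²]} = √2.) -/

import Mathlib

lemma aux13_ub : ∀ r ∈ {r : ℝ | ∃ (m : ℕ) (a b : Fin m → ℝ),
      (∀ u v : ℝ, u ^ 2 + v ^ 2 ≤ 1 → ∑ j, |a j * u + b j * v| ≤ 1) ∧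
      r = ∑ j, abs (|a j| - |b j|)}, r ≤ Real.sqrt 2 := by
  rintro r ⟨m, a, b, hc, rfl⟩
  have h2 : (0:ℝ) < Real.sqrt 2 := by positivity
  have hs : Real.sqrt 2 ^ 2 = 2 := Real.sq_sqrt (by norm_num)
  have key := hc (Real.sqrt 2)⁻¹ (-(Real.sqrt 2)⁻¹) (by
    rw [neg_pow, inv_pow]
    rw [hs]; norm_num)
  have step : ∑ j, abs (|a j| - |b j|) ≤ ∑ j, |a j - b j| := by
    apply Finset.sum_le_sum
    intro j _
    exact abs_abs_sub_abs_le_abs_sub _ _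
  have step2 : ∑ j, |a j - b j| ≤ Real.sqrt 2 := by
    have : ∑ j, |a j - b j| = Real.sqrt 2 * ∑ j, |a j * (Real.sqrt 2)⁻¹ + b j * (-(Real.sqrt 2)⁻¹)| := by
      rw [Finset.mul_sum]
      apply Finset.sum_congr rfl
      intro j _
      have heq : a j - b j = Real.sqrt 2 * (a j * (Real.sqrt 2)⁻¹ + b j * (-(Real.sqrt 2)⁻¹)) := by
        field_simp; ring
      rw [heq, abs_mul, abs_of_pos h2]
    rw [this]
    calc Real.sqrt 2 * ∑ j, |a j * (Real.sqrt 2)⁻¹ + b j * (-(Real.sqrt 2)⁻¹)|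
        ≤ Real.sqrt 2 * 1 := by
          apply mul_le_mul_of_nonneg_left key h2.le
      _ = Real.sqrt 2 := mul_one _
  linarith

theorem stmt13 :
    sSup {r : ℝ | ∃ (m : ℕ) (a b : Fin m → ℝ),
      (∀ u v : ℝ, u ^ 2 + v ^ 2 ≤ 1 → ∑ j, |a j * u + b j * v| ≤ 1) ∧
      r = ∑ j, abs (|a j| - |b j|)} = Real.sqrt 2 := by
  have h2 : (0:ℝ) < Real.sqrt 2 := by positivity
  have hs : Real.sqrt 2 ^ 2 = 2 := Real.sq_sqrt (by norm_num)
  have hmem : Real.sqrt 2 ∈ {r : ℝ | ∃ (m : ℕ) (a b : Fin m → ℝ),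
      (∀ u v : ℝ, u ^ 2 + v ^ 2 ≤ 1 → ∑ j, |a j * u + b j * v| ≤ 1) ∧
      r = ∑ j, abs (|a j| - |b j|)} := by
    refine ⟨2, ![(Real.sqrt 2)⁻¹, 0], ![0, (Real.sqrt 2)⁻¹], ?_, ?_⟩
    · intro u v huv
      have habs : |u| + |v| ≤ Real.sqrt 2 := by
        rw [show (2:ℝ) = (Real.sqrt 2)^2 from hs.symm]
        rw [Real.sqrt_sq h2.le]
        nlinarith [abs_nonneg u, abs_nonneg v, sq_abs u, sq_abs v,
          sq_nonneg (|u| - |v|), sq_nonneg (|u| + |v| - Real.sqrt 2), hs]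
      simp [Fin.sum_univ_two, abs_mul, abs_of_nonneg (inv_nonneg.2 h2.le)]
      calc (Real.sqrt 2)⁻¹ * |u| + (Real.sqrt 2)⁻¹ * |v|
          = (Real.sqrt 2)⁻¹ * (|u| + |v|) := by ring
        _ ≤ (Real.sqrt 2)⁻¹ * Real.sqrt 2 := by
            apply mul_le_mul_of_nonneg_left habs (inv_nonneg.2 h2.le)
        _ = 1 := inv_mul_cancel₀ h2.ne'
    · rw [Fin.sum_univ_two]
      simp [abs_of_nonneg (inv_nonneg.2 h2.le)]
      rw [← two_mul]
      field_simp
      exact hs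
  apply le_antisymm
  · exact csSup_le ⟨_, hmem⟩ aux13_ub
  · exact le_csSup ⟨Real.sqrt 2, aux13_ub⟩ hmem
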